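/- arXiv:2104.11819 — 3 statements merged into one kernel-verified Lean document; each statement's English description precedes it below -/
import Mathlib

section
/- The Legendre polynomial L^n, shifted to [0,1] and normalized by L^n(1) = 1, has Bernstein coefficients Π(L^n)_i = (-1)^{n+i} C(n,i); that is, L^n(x) = ∑_{i=0}^n (-1)^{n+i} C(n,i) B^n_i(x). -/
open Polynomial

/-- The shifted Legendre polynomial on `[0,1]`, normalized so that `L^n(1) = 1`,
via the Rodrigues formula `L^n(x) = (1/n!) dⁿ/dxⁿ (x² - x)ⁿ`. -/
noncomputable def shiftedLegendre (n : ℕ) : ℝ[X] :=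
  C ((n.factorial : ℝ)⁻¹) * derivative^[n] ((X ^ 2 - X) ^ n)

lemma descFac_mul (n k : ℕ) (hk : k ≤ n) :
    n.descFactorial (n - k) * n.descFactorial k = n.factorial * n.choose k := by
  rw [Nat.descFactorial_eq_factorial_mul_choose, Nat.descFactorial_eq_factorial_mul_choose,
    Nat.choose_symm hk, ← Nat.choose_mul_factorial_mul_factorial hk]
  ring

theorem shiftedLegendre_bernstein_coeffs (n : ℕ) :
    _root_.shiftedLegendre n =
      ∑ i ∈ Finset.range (n + 1),
        C ((-1 : ℝ) ^ (n + i) * (n.choose i : ℝ)) * bernsteinPolynomial ℝ n i := by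
  have h : ((X : ℝ[X]) ^ 2 - X) ^ n = X ^ n * (X - C 1) ^ n := by
    rw [← mul_pow]; congr 1; rw [C_1]; ring
  rw [_root_.shiftedLegendre, h, Polynomial.iterate_derivative_mul, Finset.mul_sum]
  refine Finset.sum_congr rfl fun k hk => ?_
  rw [Finset.mem_range, Nat.lt_succ_iff] at hk
  rw [Polynomial.iterate_derivative_X_pow_eq_smul,
      Polynomial.iterate_derivative_X_sub_pow, bernsteinPolynomial,
      Nat.sub_sub_self hk]
  have hsign : ((X : ℝ[X]) - C 1) ^ (n - k) = C ((-1 : ℝ) ^ (n - k)) * (1 - X) ^ (n - k) := by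
    rw [map_pow, ← mul_pow]; congr 1; rw [C_1, map_neg, C_1]; ring
  have hfac : (n.factorial : ℝ) ≠ 0 := Nat.cast_ne_zero.mpr n.factorial_ne_zero
  have hreal : (n.factorial : ℝ)⁻¹ * (n.choose k : ℝ) * (n.descFactorial (n - k) : ℝ) *
      (n.descFactorial k : ℝ) * (-1 : ℝ) ^ (n - k) =
      ((-1 : ℝ) ^ (n + k) * (n.choose k : ℝ)) * (n.choose k : ℝ) := by
    have key : ((n.descFactorial (n - k) : ℝ)) * (n.descFactorial k : ℝ) =
        (n.factorial : ℝ) * (n.choose k : ℝ) := by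
      exact_mod_cast congrArg (Nat.cast : ℕ → ℝ) (descFac_mul n k hk)
    have hexp : (-1 : ℝ) ^ (n + k) = (-1) ^ (n - k) := by
      rw [show n + k = (n - k) + 2 * k by omega, pow_add, pow_mul]
      simp
    rw [hexp]
    field_simp
    linear_combination ((n.choose k : ℝ)) * key
  have hcoef : (C ((n.factorial : ℝ)⁻¹) : ℝ[X]) * (n.choose k : ℝ[X]) *
      (n.descFactorial (n - k) : ℝ[X]) * (n.descFactorial k : ℝ[X]) *
      C ((-1 : ℝ) ^ (n - k)) =
      C ((-1 : ℝ) ^ (n + k) * (n.choose k : ℝ)) * (n.choose k : ℝ[X]) := by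
    have := congrArg (C : ℝ → ℝ[X]) hreal
    simpa [map_mul, map_natCast] using this
  simp only [nsmul_eq_mul, smul_eq_C_mul, map_natCast, hsign]
  linear_combination (X ^ k * (1 - X) ^ (n - k)) * hcoef
end

section
/- For each 0 ≤ j ≤ n, the vector E^{j,n} Π(L^j) of degree-n Bernstein coefficients of the shifted Legendre polynomial L^j is an eigenvector of the Bernstein mass matrix M^n with eigenvalue λ^n_j = (n!)² / ((n+j+1)!(n-j)!). -/
noncomputable def Bern (n i : ℕ) (x : ℝ) : ℝ := (n.choose i : ℝ) * x ^ i * (1 - x) ^ (n - i)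

noncomputable def Elev (m n i j : ℕ) : ℝ :=
  if j ≤ i then ((m.choose j : ℝ) * ((n - m).choose (i - j) : ℝ)) / (n.choose i : ℝ) else 0

noncomputable def Mass (n : ℕ) (i j : ℕ) : ℝ := ∫ x in (0:ℝ)..1, Bern n i x * Bern n j x

/-- Degree-j Bernstein coefficients of the shifted Legendre polynomial `L^j`. -/
noncomputable def legendreCoeff (j i : ℕ) : ℝ := (-1 : ℝ) ^ (j + i) * (j.choose i : ℝ)

open intervalIntegral in
lemma betaInt (a b : ℕ) :
    ∫ x in (0:ℝ)..1, x ^ a * (1 - x) ^ b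
      = (a.factorial : ℝ) * b.factorial / (a + b + 1).factorial := by
  induction b generalizing a with
  | zero =>
    simp only [pow_zero, mul_one, integral_pow]
    have ha : ((a:ℝ)+1) ≠ 0 := by positivity
    have hf : (a.factorial : ℝ) ≠ 0 := by exact_mod_cast Nat.factorial_ne_zero a
    simp only [Nat.add_zero, Nat.factorial_succ]
    push_cast
    field_simp
    simp
  | succ b ih =>
    have hderiv : ∀ x : ℝ, HasDerivAt (fun x : ℝ => x ^ (a+1) * (1 - x) ^ (b+1))
        (((a:ℝ)+1) * (x ^ a * (1-x)^(b+1)) - ((b:ℝ)+1) * (x^(a+1) * (1-x)^b)) x := by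
      intro x
      have h1 : HasDerivAt (fun x : ℝ => x ^ (a+1)) (((a:ℝ)+1) * x ^ a) x := by
        simpa using hasDerivAt_pow (a+1) x
      have h2 : HasDerivAt (fun x : ℝ => (1 - x) ^ (b+1)) (-(((b:ℝ)+1) * (1-x)^b)) x := by
        have h0 : HasDerivAt (fun x : ℝ => 1 - x) (-1) x := by
          simpa using (hasDerivAt_id x).const_sub 1
        have := h0.fun_pow (b+1)
        simpa [mul_comm, mul_assoc, mul_left_comm] using this
      have := h1.fun_mul h2
      refine this.congr_deriv ?_
      ring
    have hint : ∀ (p q : ℕ), IntervalIntegrable (fun x : ℝ => x ^ p * (1-x)^q)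
        MeasureTheory.volume 0 1 := by
      intro p q
      exact (Continuous.mul (continuous_pow p) ((continuous_const.sub continuous_id).pow q)).intervalIntegrable 0 1
    have hFTC := integral_eq_sub_of_hasDerivAt (a := (0:ℝ)) (b := 1) (fun x _ => hderiv x) ?_
    · have heval : ((1:ℝ) ^ (a+1) * (1 - 1) ^ (b+1) - 0 ^ (a+1) * (1 - 0) ^ (b+1)) = 0 := by
        simp
      rw [heval] at hFTC
      have hsplit : (∫ x in (0:ℝ)..1,
            (((a:ℝ)+1) * (x ^ a * (1-x)^(b+1)) - ((b:ℝ)+1) * (x^(a+1) * (1-x)^b)))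
          = (((a:ℝ)+1) * ∫ x in (0:ℝ)..1, x ^ a * (1-x)^(b+1)) -
            (((b:ℝ)+1) * ∫ x in (0:ℝ)..1, x^(a+1) * (1-x)^b) := by
        rw [← integral_const_mul, ← integral_const_mul, ← integral_sub
          ((hint a (b+1)).const_mul _) ((hint (a+1) b).const_mul _)]
      rw [hsplit, ih (a+1), sub_eq_zero] at hFTC
      have ha1 : ((a:ℝ)+1) ≠ 0 := by positivity
      have hI : (∫ x in (0:ℝ)..1, x ^ a * (1-x)^(b+1))
          = (((b:ℝ)+1) * ((((a+1).factorial : ℝ) * b.factorial) / (((a+1)+b+1).factorial : ℝ)))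
              / ((a:ℝ)+1) := by
        rw [eq_div_iff ha1]
        linarith [hFTC]
      rw [hI]
      have hfa : (((a+1).factorial : ℕ) : ℝ) = ((a:ℝ)+1) * a.factorial := by
        rw [Nat.factorial_succ]; push_cast; ring
      have hfb : (((b+1).factorial : ℕ) : ℝ) = ((b:ℝ)+1) * b.factorial := by
        rw [Nat.factorial_succ]; push_cast; ring
      have harr : (a+1) + b + 1 = a + (b+1) + 1 := by omega
      rw [harr, hfa, hfb]
      have hfn : ((a + (b+1) + 1).factorial : ℝ) ≠ 0 := by
        exact_mod_cast Nat.factorial_ne_zero _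
      field_simp
    · exact ((hint a (b+1)).const_mul _).sub ((hint (a+1) b).const_mul _)

open Finset in
lemma sum_choose_factorial (N a b : ℕ) :
    ∑ m ∈ range (N+1), ((N.choose m : ℝ) * ((a+m).factorial : ℝ) * ((b+(N-m)).factorial : ℝ))
      = (a.factorial : ℝ) * b.factorial * ((a+b+N+1).factorial : ℝ) / ((a+b+1).factorial : ℝ) := by
  have key : ∑ m ∈ range (N+1),
      ((N.choose m : ℝ) * (((a+m).factorial : ℝ) * ((b+(N-m)).factorial : ℝ)
        / ((a+b+N+1).factorial : ℝ)))
      = (a.factorial : ℝ) * b.factorial / ((a+b+1).factorial : ℝ) := by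
    have step1 : ∀ m ∈ range (N+1),
        (N.choose m : ℝ) * (((a+m).factorial : ℝ) * ((b+(N-m)).factorial : ℝ)
          / ((a+b+N+1).factorial : ℝ))
        = ∫ x in (0:ℝ)..1, (N.choose m : ℝ) * (x ^ (a+m) * (1-x)^(b+(N-m))) := by
      intro m hm
      rw [Finset.mem_range] at hm
      rw [intervalIntegral.integral_const_mul, betaInt]
      have : (a+m) + (b+(N-m)) + 1 = a+b+N+1 := by omega
      rw [this]
    rw [Finset.sum_congr rfl step1, ← intervalIntegral.integral_finset_sum]
    · have : ∀ x : ℝ, ∑ m ∈ range (N+1), (N.choose m : ℝ) * (x ^ (a+m) * (1-x)^(b+(N-m)))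
          = x ^ a * (1-x)^b := by
        intro x
        have hbin : (x + (1-x))^N = ∑ m ∈ range (N+1), x^m * (1-x)^(N-m) * (N.choose m : ℝ) :=
          add_pow x (1-x) N
        have h1 : (x + (1-x))^N = 1 := by norm_num
        calc ∑ m ∈ range (N+1), (N.choose m : ℝ) * (x ^ (a+m) * (1-x)^(b+(N-m)))
            = ∑ m ∈ range (N+1), (x^a * (1-x)^b) * (x^m * (1-x)^(N-m) * (N.choose m : ℝ)) := by
              apply Finset.sum_congr rfl
              intro m hm
              rw [pow_add, pow_add]
              ring
          _ = (x^a * (1-x)^b) * ∑ m ∈ range (N+1), (x^m * (1-x)^(N-m) * (N.choose m : ℝ)) := by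
              rw [Finset.mul_sum]
          _ = x^a * (1-x)^b := by rw [← hbin, h1, mul_one]
      rw [intervalIntegral.integral_congr (fun x _ => this x), betaInt]
    · intro m hm
      exact ((Continuous.mul (continuous_pow _)
        ((continuous_const.sub continuous_id).pow _)).intervalIntegrable 0 1).const_mul _
  have hfn : ((a+b+N+1).factorial : ℝ) ≠ 0 := by exact_mod_cast Nat.factorial_ne_zero _
  calc ∑ m ∈ range (N+1), ((N.choose m : ℝ) * ((a+m).factorial : ℝ) * ((b+(N-m)).factorial : ℝ))
      = (∑ m ∈ range (N+1),
          ((N.choose m : ℝ) * (((a+m).factorial : ℝ) * ((b+(N-m)).factorial : ℝ)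
            / ((a+b+N+1).factorial : ℝ)))) * ((a+b+N+1).factorial : ℝ) := by
        rw [Finset.sum_mul]
        apply Finset.sum_congr rfl
        intro m hm
        field_simp
    _ = (a.factorial : ℝ) * b.factorial * ((a+b+N+1).factorial : ℝ) / ((a+b+1).factorial : ℝ) := by
        rw [key]
        ring

open Polynomial Finset
set_option maxRecDepth 4000

lemma my_neg_pow {A : Type*} [CommRing A] (a : A) (k : ℕ) : (-a)^k = (-1)^k * a^k := by
  induction k with
  | zero => simp
  | succ m ih => rw [pow_succ, pow_succ, pow_succ, ih]; ring

lemma star (j x y : ℕ) :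
    ∑ k ∈ range (j+1), (-1:ℝ)^k * (j.choose k : ℝ) * ((x+k).choose k : ℝ) *
        ((y+(j-k)).choose (j-k) : ℝ)
    = ∑ k ∈ range (j+1), (-1:ℝ)^k * (j.choose k : ℝ) * (x.choose k : ℝ) *
        (y.choose (j-k) : ℝ) := by
  classical
  let P : Polynomial (Polynomial ℝ) :=
    (1+X)^x * Polynomial.C ((1+(Polynomial.X : Polynomial ℝ))^y) * (Polynomial.C (Polynomial.X : Polynomial ℝ) - X)^j
  -- Expansion 1
  have e1 : P = ∑ k ∈ range (j+1),
      Polynomial.C ((Polynomial.C ((-1:ℝ)^k * (j.choose k : ℝ))) * (1+(Polynomial.X : Polynomial ℝ))^(y+(j-k)))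
        * (1+X)^(x+k) := by
    have hsub : (Polynomial.C (Polynomial.X : Polynomial ℝ) - (X : Polynomial (Polynomial ℝ)))^j
        = ∑ k ∈ range (j+1), (-(1+X))^k * (Polynomial.C ((1+(Polynomial.X : Polynomial ℝ))))^(j-k)
            * ((j.choose k : ℕ) : Polynomial (Polynomial ℝ)) := by
      have hbase : (Polynomial.C (Polynomial.X : Polynomial ℝ) - (X : Polynomial (Polynomial ℝ))) = (-(1+X)) + Polynomial.C (1+(Polynomial.X : Polynomial ℝ)) := by
        rw [map_add, map_one]; ring
      rw [hbase, add_pow]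
    rw [show P = (1+X)^x * Polynomial.C ((1+(Polynomial.X : Polynomial ℝ))^y) * (Polynomial.C (Polynomial.X : Polynomial ℝ) - X)^j from rfl,
      hsub, Finset.mul_sum]
    apply Finset.sum_congr rfl
    intro k hk
    have hc : ((j.choose k : ℕ) : Polynomial (Polynomial ℝ))
        = Polynomial.C (Polynomial.C ((j.choose k : ℕ) : ℝ)) := by
      push_cast
      simp
    rw [hc, pow_add, pow_add, my_neg_pow ((1:Polynomial (Polynomial ℝ))+X) k]
    simp only [map_mul, map_pow, map_neg, map_one]
    ring
  -- Expansion 2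
  have e2 : P = ∑ k ∈ range (j+1),
      Polynomial.C ((Polynomial.C ((-1:ℝ)^(j-k) * (j.choose k : ℝ))) * ((1+(Polynomial.X : Polynomial ℝ))^y * (Polynomial.X : Polynomial ℝ)^k))
        * ((1+X)^x * X^(j-k)) := by
    have hsub : (Polynomial.C (Polynomial.X : Polynomial ℝ) - (X : Polynomial (Polynomial ℝ)))^j
        = ∑ k ∈ range (j+1), (Polynomial.C (Polynomial.X : Polynomial ℝ))^k * (-(X : Polynomial (Polynomial ℝ)))^(j-k)
            * ((j.choose k : ℕ) : Polynomial (Polynomial ℝ)) := by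
      rw [sub_eq_add_neg, add_pow]
    rw [show P = (1+X)^x * Polynomial.C ((1+(Polynomial.X : Polynomial ℝ))^y) * (Polynomial.C (Polynomial.X : Polynomial ℝ) - X)^j from rfl,
      hsub, Finset.mul_sum]
    apply Finset.sum_congr rfl
    intro k hk
    have hc : ((j.choose k : ℕ) : Polynomial (Polynomial ℝ))
        = Polynomial.C (Polynomial.C ((j.choose k : ℕ) : ℝ)) := by
      push_cast
      simp
    rw [hc, my_neg_pow (X : Polynomial (Polynomial ℝ)) (j-k)]
    simp only [map_mul, map_pow, map_neg, map_one]
    ring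
  -- coefficient via expansion 1
  have c1 : (P.coeff x).coeff y
      = ∑ k ∈ range (j+1), (-1:ℝ)^k * (j.choose k : ℝ) * ((x+k).choose x : ℝ) *
          ((y+(j-k)).choose y : ℝ) := by
    rw [e1, Polynomial.finset_sum_coeff]
    have h1 : ∀ k ∈ range (j+1),
        ((Polynomial.C ((Polynomial.C ((-1:ℝ)^k * (j.choose k : ℝ))) * (1+(Polynomial.X : Polynomial ℝ))^(y+(j-k)))
          * (1+X)^(x+k)).coeff x)
        = (Polynomial.C ((-1:ℝ)^k * (j.choose k : ℝ))) * (1+(Polynomial.X : Polynomial ℝ))^(y+(j-k))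
            * (((x+k).choose x : ℕ) : Polynomial ℝ) := by
      intro k hk
      rw [Polynomial.coeff_C_mul, Polynomial.coeff_one_add_X_pow]
    rw [Finset.sum_congr rfl h1, Polynomial.finset_sum_coeff]
    apply Finset.sum_congr rfl
    intro k hk
    have : (((x+k).choose x : ℕ) : Polynomial ℝ) = Polynomial.C (((x+k).choose x : ℕ) : ℝ) := by simp
    rw [this, Polynomial.coeff_mul_C, Polynomial.coeff_C_mul, Polynomial.coeff_one_add_X_pow]
    ring
  -- coefficient via expansion 2
  have c2 : (P.coeff x).coeff y
      = ∑ k ∈ range (j+1), ((-1:ℝ)^(j-k) * (j.choose k : ℝ))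
          * (if j-k ≤ x then (x.choose (x-(j-k)) : ℝ) else 0)
          * (if k ≤ y then (y.choose (y-k) : ℝ) else 0) := by
    rw [e2, Polynomial.finset_sum_coeff]
    have h1 : ∀ k ∈ range (j+1),
        ((Polynomial.C ((Polynomial.C ((-1:ℝ)^(j-k) * (j.choose k : ℝ))) * ((1+(Polynomial.X : Polynomial ℝ))^y * (Polynomial.X : Polynomial ℝ)^k))
          * ((1+X)^x * X^(j-k))).coeff x)
        = (Polynomial.C ((-1:ℝ)^(j-k) * (j.choose k : ℝ))) * ((1+(Polynomial.X : Polynomial ℝ))^y * (Polynomial.X : Polynomial ℝ)^k)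
            * (if j-k ≤ x then ((x.choose (x-(j-k)) : ℕ) : Polynomial ℝ) else 0) := by
      intro k hk
      rw [Polynomial.coeff_C_mul, Polynomial.coeff_mul_X_pow', Polynomial.coeff_one_add_X_pow]
    rw [Finset.sum_congr rfl h1, Polynomial.finset_sum_coeff]
    apply Finset.sum_congr rfl
    intro k hk
    by_cases hjk : j - k ≤ x
    · simp only [hjk, if_true]
      have : (((x.choose (x-(j-k)) : ℕ)) : Polynomial ℝ) = Polynomial.C ((x.choose (x-(j-k)) : ℕ) : ℝ) := by
        simp
      rw [this, Polynomial.coeff_mul_C, mul_assoc, Polynomial.coeff_C_mul,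
        Polynomial.coeff_mul_X_pow', Polynomial.coeff_one_add_X_pow]
      split <;> [skip; simp] <;> ring
    · simp only [hjk, if_false]
      simp
  -- matching expansion 1 with LHS
  have m1 : ∑ k ∈ range (j+1), (-1:ℝ)^k * (j.choose k : ℝ) * ((x+k).choose k : ℝ) *
        ((y+(j-k)).choose (j-k) : ℝ)
      = (P.coeff x).coeff y := by
    rw [c1]
    apply Finset.sum_congr rfl
    intro k hk
    have h1 : (x+k).choose x = (x+k).choose k := by
      rw [← Nat.choose_symm (Nat.le_add_right x k)]
      congr 1
      omega
    have h2 : (y+(j-k)).choose y = (y+(j-k)).choose (j-k) := by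
      rw [← Nat.choose_symm (Nat.le_add_right y (j-k))]
      congr 1
      omega
    rw [h1, h2]
  -- matching expansion 2 with RHS
  have m2 : (P.coeff x).coeff y
      = ∑ k ∈ range (j+1), (-1:ℝ)^k * (j.choose k : ℝ) * (x.choose k : ℝ) *
          (y.choose (j-k) : ℝ) := by
    rw [c2, ← Finset.sum_range_reflect]
    apply Finset.sum_congr rfl
    intro k hk
    rw [Finset.mem_range] at hk
    have hk' : k ≤ j := by omega
    have e0 : j + 1 - 1 - k = j - k := by omega
    have e1 : j - (j - k) = k := by omega
    rw [e0, e1, Nat.choose_symm hk']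
    by_cases h1 : k ≤ x
    · by_cases h2 : j - k ≤ y
      · simp only [h1, h2, if_true]
        rw [Nat.choose_symm h1, Nat.choose_symm h2]
      · simp only [h1, h2, if_true, if_false]
        have h0 : y.choose (j-k) = 0 := Nat.choose_eq_zero_of_lt (by omega)
        simp [h0]
    · simp only [h1, if_false]
      have h0 : x.choose k = 0 := Nat.choose_eq_zero_of_lt (by omega)
      simp [h0]
  rw [m1, m2]

lemma Mass_eq (n i i' : ℕ) (hi : i ≤ n) (hi' : i' ≤ n) :
    Mass n i i' = (n.choose i : ℝ) * (n.choose i' : ℝ) * ((i+i').factorial : ℝ)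
      * ((((n-i)+(n-i')).factorial : ℝ)) / ((2*n+1).factorial : ℝ) := by
  unfold Mass
  have hcong : ∀ x ∈ Set.uIcc (0:ℝ) 1, Bern n i x * Bern n i' x
      = ((n.choose i : ℝ) * (n.choose i' : ℝ)) * (x ^ (i+i') * (1-x) ^ ((n-i)+(n-i'))) := by
    intro x _
    unfold Bern
    rw [pow_add, pow_add]
    ring
  rw [intervalIntegral.integral_congr hcong, intervalIntegral.integral_const_mul, betaInt]
  have harg : (i+i') + ((n-i)+(n-i')) + 1 = 2*n+1 := by omega
  rw [harg]
  ring

lemma key (n j i k : ℕ) (hj : j ≤ n) (hi : i ≤ n) (hk : k ≤ j) :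
    ∑ i' ∈ Finset.range (n+1), Mass n i i' * Elev j n i' k
      = (n.choose i : ℝ) * (j.choose k : ℝ) * ((i+k).factorial : ℝ)
        * ((((n-i)+(j-k)).factorial : ℝ)) / ((n+j+1).factorial : ℝ) := by
  classical
  set f : ℕ → ℝ := fun i' => Mass n i i' * Elev j n i' k with hf
  have hinj : Function.Injective (fun m => k + m) := fun a b h => by
    simp only at h
    omega
  have hsub : (Finset.range (n-j+1)).image (fun m => k + m) ⊆ Finset.range (n+1) := by
    intro t ht
    simp only [Finset.mem_image, Finset.mem_range] at ht ⊢
    obtain ⟨m, hm, rfl⟩ := ht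
    omega
  have hzero : ∀ t ∈ Finset.range (n+1), t ∉ (Finset.range (n-j+1)).image (fun m => k + m)
      → f t = 0 := by
    intro t ht hnt
    simp only [Finset.mem_image, Finset.mem_range] at ht hnt
    by_cases hkt : k ≤ t
    · have hbig : n - j < t - k := by
        by_contra hle
        exact hnt ⟨t - k, by omega, by omega⟩
      have h0 : (n-j).choose (t-k) = 0 := Nat.choose_eq_zero_of_lt hbig
      simp [hf, Elev, hkt, h0]
    · simp [hf, Elev, hkt]
  have hstep : ∑ i' ∈ Finset.range (n+1), f i' = ∑ m ∈ Finset.range (n-j+1), f (k+m) := by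
    rw [← Finset.sum_subset hsub hzero, Finset.sum_image (fun a _ b _ h => hinj h)]
  rw [hstep]
  have hterm : ∀ m ∈ Finset.range (n-j+1), f (k+m)
      = ((n.choose i : ℝ) * (j.choose k : ℝ) / ((2*n+1).factorial : ℝ))
        * (((n-j).choose m : ℝ) * (((i+k)+m).factorial : ℝ)
          * (((((n-i)+(j-k))+((n-j)-m)).factorial : ℝ)) ) := by
    intro m hm
    rw [Finset.mem_range] at hm
    have hm' : m ≤ n - j := by omega
    have hkm : k + m ≤ n := by omega
    have hcpos : (0:ℝ) < (n.choose (k+m) : ℝ) := by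
      exact_mod_cast Nat.choose_pos hkm
    have hElev : Elev j n (k+m) k = ((j.choose k : ℝ) * ((n-j).choose m : ℝ)) / (n.choose (k+m) : ℝ) := by
      unfold Elev
      rw [if_pos (Nat.le_add_right k m), Nat.add_sub_cancel_left]
    rw [hf]
    simp only
    rw [Mass_eq n i (k+m) hi hkm, hElev]
    have ha1 : i + (k+m) = (i+k)+m := by omega
    have ha2 : (n-i)+(n-(k+m)) = ((n-i)+(j-k))+((n-j)-m) := by omega
    rw [ha1, ha2]
    field_simp
  rw [Finset.sum_congr rfl hterm, ← Finset.mul_sum, sum_choose_factorial (n-j) (i+k) ((n-i)+(j-k))]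
  have hb1 : (i+k) + ((n-i)+(j-k)) + (n-j) + 1 = 2*n+1 := by omega
  have hb2 : (i+k) + ((n-i)+(j-k)) + 1 = n+j+1 := by omega
  rw [hb1, hb2]
  have h1 : ((2*n+1).factorial : ℝ) ≠ 0 := by exact_mod_cast Nat.factorial_ne_zero _
  have h2 : ((n+j+1).factorial : ℝ) ≠ 0 := by exact_mod_cast Nat.factorial_ne_zero _
  field_simp

theorem mass_eigenvector (n j : ℕ) (hj : j ≤ n) (i : ℕ) (hi : i ≤ n) :
    (∑ i' ∈ Finset.range (n + 1),
        Mass n i i' * (∑ k ∈ Finset.range (j + 1), Elev j n i' k * legendreCoeff j k)) =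
      ((n.factorial : ℝ) ^ 2 / (((n + j + 1).factorial : ℝ) * ((n - j).factorial : ℝ))) *
        ∑ k ∈ Finset.range (j + 1), Elev j n i k * legendreCoeff j k := by
  classical
  set lam : ℝ := (n.factorial : ℝ) ^ 2 / (((n + j + 1).factorial : ℝ) * ((n - j).factorial : ℝ))
    with hlam
  set c : ℝ := (-1:ℝ)^j * (n.factorial : ℝ) * (j.factorial : ℝ) / ((n+j+1).factorial : ℝ)
    with hc
  have hswap : (∑ i' ∈ Finset.range (n + 1),
        Mass n i i' * (∑ k ∈ Finset.range (j + 1), Elev j n i' k * legendreCoeff j k))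
      = ∑ k ∈ Finset.range (j + 1),
          (∑ i' ∈ Finset.range (n+1), Mass n i i' * Elev j n i' k) * legendreCoeff j k := by
    simp_rw [Finset.mul_sum]
    rw [Finset.sum_comm]
    apply Finset.sum_congr rfl
    intro k _
    rw [Finset.sum_mul]
    apply Finset.sum_congr rfl
    intro i' _
    ring
  rw [hswap]
  -- Step T1
  have T1 : ∀ k ∈ Finset.range (j+1),
      (∑ i' ∈ Finset.range (n+1), Mass n i i' * Elev j n i' k) * legendreCoeff j k
      = c * ((-1:ℝ)^k * (j.choose k : ℝ) * ((i+k).choose k : ℝ) *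
          (((n-i)+(j-k)).choose (j-k) : ℝ)) := by
    intro k hk
    rw [Finset.mem_range] at hk
    have hk' : k ≤ j := by omega
    rw [key n j i k hj hi hk']
    unfold legendreCoeff
    have hc1 : ((n.choose i : ℕ) : ℝ) * (i.factorial : ℝ) * ((n-i).factorial : ℝ)
        = (n.factorial : ℝ) := by
      exact_mod_cast Nat.choose_mul_factorial_mul_factorial hi
    have hc2 : ((j.choose k : ℕ) : ℝ) * (k.factorial : ℝ) * ((j-k).factorial : ℝ)
        = (j.factorial : ℝ) := by
      exact_mod_cast Nat.choose_mul_factorial_mul_factorial hk'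
    have hc3 : (((i+k).choose k : ℕ) : ℝ) * (k.factorial : ℝ) * (i.factorial : ℝ)
        = ((i+k).factorial : ℝ) := by
      have := Nat.choose_mul_factorial_mul_factorial (Nat.le_add_left k i)
      rw [Nat.add_sub_cancel] at this
      exact_mod_cast this
    have hc4 : ((((n-i)+(j-k)).choose (j-k) : ℕ) : ℝ) * ((j-k).factorial : ℝ)
        * ((n-i).factorial : ℝ) = (((n-i)+(j-k)).factorial : ℝ) := by
      have := Nat.choose_mul_factorial_mul_factorial (Nat.le_add_left (j-k) (n-i))
      rw [Nat.add_sub_cancel] at this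
      exact_mod_cast this
    rw [hc, ← hc1, ← hc2, ← hc3, ← hc4, pow_add]
    ring
  rw [Finset.sum_congr rfl T1, ← Finset.mul_sum, star j i (n-i), Finset.mul_sum]
  -- Step T2
  have T2 : ∀ k ∈ Finset.range (j+1),
      c * ((-1:ℝ)^k * (j.choose k : ℝ) * (i.choose k : ℝ) * ((n-i).choose (j-k) : ℝ))
      = lam * (Elev j n i k * legendreCoeff j k) := by
    intro k hk
    rw [Finset.mem_range] at hk
    have hk' : k ≤ j := by omega
    unfold Elev legendreCoeff
    by_cases hki : k ≤ i
    · rw [if_pos hki]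
      by_cases hnj : i - k ≤ n - j
      · have hd1 : ((n.choose i : ℕ) : ℝ) * (i.factorial : ℝ) * ((n-i).factorial : ℝ)
            = (n.factorial : ℝ) := by
          exact_mod_cast Nat.choose_mul_factorial_mul_factorial hi
        have hd2 : ((j.choose k : ℕ) : ℝ) * (k.factorial : ℝ) * ((j-k).factorial : ℝ)
            = (j.factorial : ℝ) := by
          exact_mod_cast Nat.choose_mul_factorial_mul_factorial hk'
        have hd3 : (((n-j).choose (i-k) : ℕ) : ℝ) * ((i-k).factorial : ℝ)
            * (((n-j)-(i-k)).factorial : ℝ) = ((n-j).factorial : ℝ) := by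
          exact_mod_cast Nat.choose_mul_factorial_mul_factorial hnj
        have hd4 : ((i.choose k : ℕ) : ℝ) * (k.factorial : ℝ) * ((i-k).factorial : ℝ)
            = (i.factorial : ℝ) := by
          exact_mod_cast Nat.choose_mul_factorial_mul_factorial hki
        have hd5 : (((n-i).choose (j-k) : ℕ) : ℝ) * ((j-k).factorial : ℝ)
            * (((n-i)-(j-k)).factorial : ℝ) = ((n-i).factorial : ℝ) := by
          have hle : j - k ≤ n - i := by omega
          exact_mod_cast Nat.choose_mul_factorial_mul_factorial hle
        have he : (n-j)-(i-k) = (n-i)-(j-k) := by omega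
        have hz1 : ((n+j+1).factorial : ℝ) ≠ 0 := by exact_mod_cast Nat.factorial_ne_zero _
        have hz2 : ((n.choose i : ℕ) : ℝ) ≠ 0 := by
          exact_mod_cast Nat.ne_of_gt (Nat.choose_pos hi)
        have hz3 : (((n-j).choose (i-k) : ℕ) : ℝ) ≠ 0 := by
          exact_mod_cast Nat.ne_of_gt (Nat.choose_pos hnj)
        have hz4 : ((i-k).factorial : ℝ) ≠ 0 := by exact_mod_cast Nat.factorial_ne_zero _
        have hz5 : (((n-i)-(j-k)).factorial : ℝ) ≠ 0 := by
          exact_mod_cast Nat.factorial_ne_zero _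
        have hz6 : ((j-k).factorial : ℝ) ≠ 0 := by exact_mod_cast Nat.factorial_ne_zero _
        have hz7 : ((k).factorial : ℝ) ≠ 0 := by exact_mod_cast Nat.factorial_ne_zero _
        rw [he] at hd3
        rw [hlam, hc, ← hd1, ← hd2, ← hd3, ← hd4, ← hd5, pow_add]
        field_simp
      · have h01 : (n-j).choose (i-k) = 0 := Nat.choose_eq_zero_of_lt (by omega)
        have h02 : (n-i).choose (j-k) = 0 := Nat.choose_eq_zero_of_lt (by omega)
        rw [h01, h02]
        simp
    · rw [if_neg hki]
      have h0 : i.choose k = 0 := Nat.choose_eq_zero_of_lt (by omega)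
      rw [h0]
      simp
  rw [Finset.sum_congr rfl T2, ← Finset.mul_sum]
end

section
/- For m ≤ n, the matrix (E^{m,n})^T E^{m,n} has eigenvectors E^{j,m} Π(L^j) (for 0 ≤ j ≤ m) with corresponding eigenvalues λ^m_j / λ^n_j, where λ^n_j = (n!)² / ((n+j+1)!(n-j)!). -/
/-- binomial coefficient with integer lower index (0 for negative). -/
noncomputable def zch (s : ℕ) (t : ℤ) : ℝ := if 0 ≤ t then (s.choose t.toNat : ℝ) else 0

lemma zch_neg {s : ℕ} {t : ℤ} (h : t < 0) : zch s t = 0 := by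
  simp [zch, not_le.mpr h]

lemma zch_coe (s k : ℕ) : zch s (k : ℤ) = (s.choose k : ℝ) := by
  simp [zch]

lemma zch_absorb (s : ℕ) (t : ℤ) :
    ((t : ℝ) + 1) * zch s (t + 1) = ((s : ℝ) - t) * zch s t := by
  rcases lt_or_ge t 0 with ht | ht
  · rcases eq_or_lt_of_le (Int.add_one_le_iff.mpr ht) with h0 | h0
    · have hz : t = -1 := by omega
      subst hz
      rw [zch_neg (by norm_num : (-1:ℤ) < 0)]
      norm_num
    · rw [zch_neg ht, zch_neg (by omega)]; ring
  · obtain ⟨k, rfl⟩ := Int.eq_ofNat_of_zero_le ht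
    have h1 : (k : ℤ) + 1 = ((k + 1 : ℕ) : ℤ) := by push_cast; ring
    rw [h1, zch_coe, zch_coe]
    rcases lt_or_ge k s with hk | hk
    · have := Nat.choose_succ_right_eq s k
      have hcast := congrArg (Nat.cast (R := ℝ)) this
      push_cast [Nat.cast_sub hk.le] at hcast
      push_cast
      linarith [hcast]
    · rw [Nat.choose_eq_zero_of_lt (by omega)]
      rcases eq_or_lt_of_le hk with h | h
      · rw [← h]; push_cast; ring
      · rw [Nat.choose_eq_zero_of_lt h]; push_cast; ring

lemma zch_pascal (s : ℕ) (t : ℤ) : zch (s + 1) t = zch s t + zch s (t - 1) := by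
  rcases lt_or_ge t 0 with ht | ht
  · rw [zch_neg ht, zch_neg ht, zch_neg (by omega)]; ring
  · obtain ⟨k, rfl⟩ := Int.eq_ofNat_of_zero_le ht
    rcases Nat.eq_zero_or_pos k with rfl | hk
    · norm_num [zch, zch_neg]
    · obtain ⟨k', rfl⟩ := Nat.exists_eq_succ_of_ne_zero hk.ne'
      have h1 : ((k' + 1 : ℕ) : ℤ) - 1 = (k' : ℤ) := by push_cast; ring
      rw [h1, zch_coe, zch_coe, zch_coe, Nat.choose_succ_succ]
      push_cast; ring

/-- sign helper -/
noncomputable def zs (l : ℤ) : ℝ := if 0 ≤ l then (-1 : ℝ) ^ l.toNat else 0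

/-- degree-elevated (unnormalized) Bernstein coefficients of Legendre -/
noncomputable def uu (S j : ℕ) (l : ℤ) : ℝ :=
  ∑ k ∈ Finset.range (j + 1), (-1 : ℝ) ^ k * (j.choose k : ℝ) ^ 2 * zch S (l - k)

lemma uu_pascal (S j : ℕ) (l : ℤ) : uu (S + 1) j l = uu S j l + uu S j (l - 1) := by
  unfold uu
  rw [← Finset.sum_add_distrib]
  refine Finset.sum_congr rfl fun k _ => ?_
  have : l - 1 - (k : ℤ) = l - k - 1 := by ring
  rw [this, zch_pascal, mul_add]

lemma uu_zero (j : ℕ) (l : ℤ) : uu 0 j l = zs l * zch j l ^ 2 := by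
  unfold uu
  rcases lt_or_ge l 0 with hl | hl
  · rw [zch_neg hl]
    rw [Finset.sum_eq_zero (fun k _ => by rw [zch_neg (by omega : l - (k:ℤ) < 0)]; ring)]
    ring
  · obtain ⟨lN, rfl⟩ := Int.eq_ofNat_of_zero_le hl
    rcases lt_or_ge lN (j + 1) with hlj | hlj
    · rw [Finset.sum_eq_single_of_mem lN (Finset.mem_range.mpr hlj)]
      · have h0 : (lN : ℤ) - (lN : ℤ) = ((0:ℕ) : ℤ) := by ring
        rw [h0, zch_coe, zch_coe]
        simp only [zs, Int.le.intro_sub, if_pos (by positivity : (0:ℤ) ≤ (lN:ℤ)), 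
          Nat.choose_zero_right, Nat.cast_one, Int.toNat_natCast]
        ring
      · intro k _ hk
        rcases lt_or_ge (lN : ℤ) (k : ℤ) with h | h
        · rw [zch_neg (by omega)]; ring
        · have h1 : (lN:ℤ) - (k:ℤ) = ((lN - k : ℕ) : ℤ) := by omega
          have h2 : (0:ℕ).choose (lN - k) = 0 :=
            Nat.choose_eq_zero_of_lt (by omega)
          rw [h1, zch_coe, h2]
          push_cast; ring
    · have h3 : j.choose lN = 0 := Nat.choose_eq_zero_of_lt (by omega)
      rw [Finset.sum_eq_zero, zch_coe, h3]
      · simp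
      intro k hk
      rw [Finset.mem_range] at hk
      have h1 : (lN:ℤ) - (k:ℤ) = ((lN - k : ℕ) : ℤ) := by omega
      have h2 : (0:ℕ).choose (lN - k) = 0 :=
        Nat.choose_eq_zero_of_lt (by omega)
      rw [h1, zch_coe, h2]
      push_cast; ring

lemma zs_succ_mul (l : ℤ) (hl : 0 ≤ l) (x : ℝ) : zs (l + 1) * x = - zs l * x := by
  have h1 : 0 ≤ l + 1 := by omega
  rw [zs, zs, if_pos h1, if_pos hl]
  have : (l+1).toNat = l.toNat + 1 := by omega
  rw [this, pow_succ]
  ring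

theorem star_s18 (S j : ℕ) (i : ℤ) :
    ((S : ℝ) + j + 1 - i) ^ 2 * (uu S j i + uu S j (i - 1)) +
      ((i : ℝ) + 1) ^ 2 * (uu S j i + uu S j (i + 1)) =
    ((S : ℝ) + 2 * j + 2) * ((S : ℝ) + 1) * uu S j i := by
  induction S generalizing i with
  | zero =>
    rw [uu_zero, uu_zero, uu_zero]
    rcases lt_or_ge i 0 with hi | hi
    · -- i ≤ -1 : everything with nonneg index has zero coefficient or zero zch
      rw [zch_neg hi, zch_neg (by omega)]
      rcases eq_or_lt_of_le (Int.add_one_le_iff.mpr hi) with h0 | h0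
      · -- i = -1
        have : (i:ℝ) + 1 = 0 := by
          have : i = -1 := by omega
          rw [this]; push_cast; ring
        rw [this]; ring
      · rw [zch_neg (by omega)]
        have hzs : zs i = 0 := by rw [zs, if_neg (not_le.mpr hi)]
        rw [hzs]; ring
    · -- i ≥ 0: use absorption
      have h2 : (i : ℤ) - 1 + 1 = i := by ring
      have hAl := zch_absorb j (i - 1)
      rw [h2] at hAl
      push_cast at hAl
      have hA : ((i:ℝ)) ^ 2 * zch j i ^ 2 = ((j:ℝ) - i + 1) ^ 2 * zch j (i - 1) ^ 2 := by
        have hAl' : ((i:ℝ)) * zch j i = ((j:ℝ) - i + 1) * zch j (i - 1) := by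
          linarith [hAl]
        linear_combination ((i:ℝ) * zch j i + ((j:ℝ) - i + 1) * zch j (i - 1)) * hAl'
      have hBl := zch_absorb j i
      push_cast at hBl
      have hB : ((i:ℝ) + 1) ^ 2 * zch j (i + 1) ^ 2 = ((j:ℝ) - i) ^ 2 * zch j i ^ 2 := by
        linear_combination (((i:ℝ) + 1) * zch j (i + 1) + ((j:ℝ) - i) * zch j i) * hBl
      have hs1 : zs (i - 1) * zch j (i - 1) ^ 2 = - zs i * zch j (i - 1) ^ 2 := by
        rcases eq_or_lt_of_le hi with h0 | h0
        · rw [← h0]; rw [zch_neg (by omega)]; ring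
        · have hh := zs_succ_mul (i - 1) (by omega) (zch j (i - 1) ^ 2)
          rw [h2] at hh
          linarith [hh]
      have hs2 : zs (i + 1) * zch j (i + 1) ^ 2 = - zs i * zch j (i + 1) ^ 2 :=
        zs_succ_mul i hi _
      rw [hs1, hs2]
      push_cast
      linear_combination zs i * hA - zs i * hB
  | succ S ih =>
    have h1 := ih i
    have h2 := ih (i - 1)
    rw [uu_pascal, uu_pascal, uu_pascal]
    have e1 : i - 1 - 1 = i - 2 := by ring
    have e2 : i + 1 - 1 = i := by ring
    have e3 : i - 1 + 1 = i := by ring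
    rw [e1, e2]
    rw [e1, e3] at h2
    push_cast at h1 h2 ⊢
    linear_combination h1 + h2

/-- Eigenvalue `λ^n_j` of the Bernstein mass matrix `M^n`. -/
noncomputable def massEig (n j : ℕ) : ℝ :=
  (n.factorial : ℝ) ^ 2 / (((n + j + 1).factorial : ℝ) * ((n - j).factorial : ℝ))

noncomputable def wB (n j l : ℕ) : ℝ :=
  ∑ k ∈ Finset.range (j + 1), Elev j n l k * legendreCoeff j k

lemma massEig_ne_zero (n j : ℕ) : massEig n j ≠ 0 := by
  unfold massEig
  positivity

lemma wB_eq (n j l : ℕ) (hjn : j ≤ n) (hln : l ≤ n) :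
    wB n j l = (-1 : ℝ) ^ j * uu (n - j) j (l : ℤ) / (n.choose l : ℝ) := by
  unfold wB uu
  rw [mul_div_assoc, Finset.sum_div, Finset.mul_sum]
  refine Finset.sum_congr rfl fun k hk => ?_
  rw [Finset.mem_range] at hk
  unfold Elev legendreCoeff
  rcases le_or_gt k l with hkl | hkl
  · rw [if_pos hkl]
    have h1 : (l : ℤ) - (k : ℤ) = ((l - k : ℕ) : ℤ) := by omega
    rw [h1, zch_coe, pow_add]
    field_simp
  · rw [if_neg (not_le.mpr hkl), zch_neg (by omega)]
    ring

lemma massEig_ratio (n j : ℕ) (hjn : j ≤ n) :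
    massEig n j / massEig (n + 1) j =
      ((n : ℝ) + j + 2) * ((n : ℝ) + 1 - j) / ((n : ℝ) + 1) ^ 2 := by
  have F1 : ((n + 1 + j + 1).factorial : ℝ) = ((n:ℝ) + j + 2) * ((n + j + 1).factorial : ℝ) := by
    rw [show n + 1 + j + 1 = (n + j + 1) + 1 by ring, Nat.factorial_succ]
    push_cast; ring
  have F2 : ((n + 1 - j).factorial : ℝ) = ((n:ℝ) + 1 - j) * ((n - j).factorial : ℝ) := by
    rw [show n + 1 - j = (n - j) + 1 by omega, Nat.factorial_succ]
    push_cast [Nat.cast_sub hjn]; ring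
  have F3 : ((n + 1).factorial : ℝ) = ((n:ℝ) + 1) * (n.factorial : ℝ) := by
    rw [Nat.factorial_succ]; push_cast; ring
  have f1 : ((n + j + 1).factorial : ℝ) ≠ 0 := Nat.cast_ne_zero.mpr (Nat.factorial_ne_zero _)
  have f2 : ((n - j).factorial : ℝ) ≠ 0 := Nat.cast_ne_zero.mpr (Nat.factorial_ne_zero _)
  have f3 : ((n).factorial : ℝ) ≠ 0 := Nat.cast_ne_zero.mpr (Nat.factorial_ne_zero _)
  have g1 : ((n:ℝ) + j + 2) ≠ 0 := by positivity
  have g2 : ((n:ℝ) + 1 - j) ≠ 0 := by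
    have : (j:ℝ) ≤ n := by exact_mod_cast hjn
    nlinarith [this]
  have g3 : ((n:ℝ) + 1) ≠ 0 := by positivity
  unfold massEig
  rw [F1, F2, F3]
  field_simp

lemma onestep (n j i : ℕ) (hjn : j ≤ n) (hin : i ≤ n) :
    ∑ l ∈ Finset.range (n + 2), Elev n (n + 1) l i * wB (n + 1) j l =
      (massEig n j / massEig (n + 1) j) * wB n j i := by
  -- collapse the sum to the two nonzero terms l = i and l = i + 1
  have hsub : ({i, i + 1} : Finset ℕ) ⊆ Finset.range (n + 2) := by
    intro x hx
    simp only [Finset.mem_insert, Finset.mem_singleton] at hx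
    rcases hx with rfl | rfl <;> simp <;> omega
  have hvan : ∀ x ∈ Finset.range (n + 2), x ∉ ({i, i + 1} : Finset ℕ) →
      Elev n (n + 1) x i * wB (n + 1) j x = 0 := by
    intro x _ hx
    simp only [Finset.mem_insert, Finset.mem_singleton, not_or] at hx
    have hE : Elev n (n + 1) x i = 0 := by
      unfold Elev
      rcases le_or_gt i x with h | h
      · rw [if_pos h]
        have h2 : (n + 1 - n).choose (x - i) = 0 := by
          have : n + 1 - n = 1 := by omega
          rw [this]
          exact Nat.choose_eq_zero_of_lt (by omega)
        rw [h2]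
        simp
      · rw [if_neg (not_le.mpr h)]
    rw [hE, zero_mul]
  rw [← Finset.sum_subset hsub hvan, Finset.sum_insert (by simp), Finset.sum_singleton]
  -- values of the elevation matrix entries
  have hv1 : Elev n (n + 1) i i = (n.choose i : ℝ) / ((n + 1).choose i : ℝ) := by
    unfold Elev
    rw [if_pos (le_refl i)]
    have : n + 1 - n = 1 := by omega
    rw [this, Nat.sub_self, Nat.choose_zero_right]
    norm_num
  have hv2 : Elev n (n + 1) (i + 1) i = (n.choose i : ℝ) / ((n + 1).choose (i + 1) : ℝ) := by
    unfold Elev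
    rw [if_pos (by omega : i ≤ i + 1)]
    have h1 : n + 1 - n = 1 := by omega
    have h2 : i + 1 - i = 1 := by omega
    rw [h1, h2, Nat.choose_self]
    norm_num
  rw [hv1, hv2, massEig_ratio n j hjn,
    wB_eq (n + 1) j i (by omega) (by omega),
    wB_eq (n + 1) j (i + 1) (by omega) (by omega),
    wB_eq n j i hjn hin]
  -- express uu at level n+1 via Pascal
  have hp : n + 1 - j = (n - j) + 1 := by omega
  rw [hp, uu_pascal, uu_pascal]
  -- the three-term recurrence
  have hst := star_s18 (n - j) j (i : ℤ)
  have hc : ((n - j : ℕ) : ℝ) = (n : ℝ) - j := Nat.cast_sub hjn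
  rw [hc] at hst
  -- binomial ratio identities
  have e2N := Nat.add_one_mul_choose_eq n i
  have e1N := Nat.choose_succ_right_eq (n + 1) i
  have e2 : ((n : ℝ) + 1) * (n.choose i : ℝ) = ((i : ℝ) + 1) * ((n + 1).choose (i + 1) : ℝ) := by
    have h := congrArg (Nat.cast (R := ℝ)) e2N
    push_cast at h
    linarith [h]
  have e1 : ((n : ℝ) + 1) * (n.choose i : ℝ) = ((n : ℝ) + 1 - i) * ((n + 1).choose i : ℝ) := by
    have h3 := congrArg (Nat.cast (R := ℝ)) e1N
    push_cast [Nat.cast_sub (by omega : i ≤ n + 1)] at h3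
    rw [e2]
    linarith [h3]
  have hc1 : (n.choose i : ℝ) ≠ 0 := (Nat.cast_pos.mpr (Nat.choose_pos hin)).ne'
  have hc2 : ((n + 1).choose i : ℝ) ≠ 0 := (Nat.cast_pos.mpr (Nat.choose_pos (by omega))).ne'
  have hc3 : ((n + 1).choose (i + 1) : ℝ) ≠ 0 := (Nat.cast_pos.mpr (Nat.choose_pos (by omega))).ne'
  have hn1 : ((n : ℝ) + 1) ≠ 0 := by positivity
  have e1s : (((n : ℝ) + 1) * (n.choose i : ℝ)) ^ 2 =
      (((n : ℝ) + 1 - i) * ((n + 1).choose i : ℝ)) ^ 2 := by rw [e1]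
  have e2s : (((n : ℝ) + 1) * (n.choose i : ℝ)) ^ 2 =
      (((i : ℝ) + 1) * ((n + 1).choose (i + 1) : ℝ)) ^ 2 := by rw [e2]
  simp only [Nat.cast_add, Nat.cast_one, add_sub_cancel_right]
  push_cast
  rw [div_mul_div_comm, div_mul_div_comm, div_mul_div_comm,
    div_add_div _ _ (mul_ne_zero hc2 hc2) (mul_ne_zero hc3 hc3),
    div_eq_div_iff (mul_ne_zero (mul_ne_zero hc2 hc2) (mul_ne_zero hc3 hc3))
      (mul_ne_zero (pow_ne_zero 2 hn1) hc1)]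
  linear_combination ((-1 : ℝ) ^ j * (uu (n - j) j i + uu (n - j) j ((i : ℤ) - 1)) *
      ((n + 1).choose (i + 1) : ℝ) ^ 2) * e1s +
    ((-1 : ℝ) ^ j * (uu (n - j) j ((i : ℤ) + 1) + uu (n - j) j i) *
      ((n + 1).choose i : ℝ) ^ 2) * e2s +
    ((-1 : ℝ) ^ j * ((n + 1).choose i : ℝ) ^ 2 * ((n + 1).choose (i + 1) : ℝ) ^ 2) * hst

lemma comp (j m n : ℕ) (hjm : j ≤ m) (hmn : m ≤ n) (l k : ℕ) (hl : l ≤ n) (hk : k ≤ j) :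
    ∑ i' ∈ Finset.range (m + 1), Elev m n l i' * Elev j m i' k = Elev j n l k := by
  rcases lt_or_ge l k with hkl | hkl
  · rw [Elev, if_neg (by omega)]
    refine Finset.sum_eq_zero fun i' _ => ?_
    rcases le_or_gt i' l with h | h
    · rw [Elev, Elev, if_neg (by omega : ¬ k ≤ i')]
      ring
    · rw [Elev, if_neg (by omega : ¬ i' ≤ l)]
      ring
  · -- the ℕ-level Vandermonde identity
    have hNat : ∑ i' ∈ Finset.range (m + 1),
        (if k ≤ i' ∧ i' ≤ l then (m - j).choose (i' - k) * (n - m).choose (l - i') else 0) =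
        (n - j).choose (l - k) := by
      have hv : n - j = (m - j) + (n - m) := by omega
      rw [hv, Nat.add_choose_eq, Finset.Nat.sum_antidiagonal_eq_sum_range_succ_mk]
      set N := max (m + 1) (l + 1) with hN
      have h1 : ∑ i' ∈ Finset.range (m + 1),
          (if k ≤ i' ∧ i' ≤ l then (m - j).choose (i' - k) * (n - m).choose (l - i') else 0) =
          ∑ i' ∈ Finset.range N,
          (if k ≤ i' ∧ i' ≤ l then (m - j).choose (i' - k) * (n - m).choose (l - i') else 0) := by
        refine Finset.sum_subset (Finset.range_subset_range.mpr (le_max_left _ _)) fun x hx hx2 => ?_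
        rw [Finset.mem_range] at hx hx2
        push_neg at hx2
        split_ifs with h
        · rw [Nat.choose_eq_zero_of_lt (by omega), zero_mul]
        · rfl
      have h2 : ∑ i' ∈ Finset.range N,
          (if k ≤ i' ∧ i' ≤ l then (m - j).choose (i' - k) * (n - m).choose (l - i') else 0) =
          ∑ i' ∈ Finset.Icc k l, (m - j).choose (i' - k) * (n - m).choose (l - i') := by
        rw [← Finset.sum_subset (show Finset.Icc k l ⊆ Finset.range N by
            intro x hx
            rw [Finset.mem_Icc] at hx
            rw [Finset.mem_range]
            have : l + 1 ≤ N := le_max_right _ _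
            omega)
          (fun x _ hx2 => by
            rw [Finset.mem_Icc] at hx2
            rw [if_neg (by omega)])]
        refine Finset.sum_congr rfl fun x hx => ?_
        rw [Finset.mem_Icc] at hx
        rw [if_pos hx]
      rw [h1, h2, ← Finset.Ico_add_one_right_eq_Icc, Finset.sum_Ico_eq_sum_range]
      have h3 : l + 1 - k = l - k + 1 := by omega
      rw [h3]
      refine Finset.sum_congr rfl fun t _ => ?_
      congr 1
      · congr 1; omega
      · congr 1; omega
    -- back to ℝ
    have hterm : ∀ i' ∈ Finset.range (m + 1), Elev m n l i' * Elev j m i' k =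
        (j.choose k : ℝ) *
          ((if k ≤ i' ∧ i' ≤ l then (m - j).choose (i' - k) * (n - m).choose (l - i') else 0 : ℕ) : ℝ)
          / (n.choose l : ℝ) := by
      intro i' hi'
      rw [Finset.mem_range] at hi'
      rcases le_or_gt k i' with h1 | h1
      · rcases le_or_gt i' l with h2 | h2
        · rw [Elev, Elev, if_pos h2, if_pos h1, if_pos ⟨h1, h2⟩]
          have hm : (m.choose i' : ℝ) ≠ 0 := (Nat.cast_pos.mpr (Nat.choose_pos (by omega))).ne'
          have hn : (n.choose l : ℝ) ≠ 0 := (Nat.cast_pos.mpr (Nat.choose_pos hl)).ne'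
          push_cast
          field_simp
        · rw [Elev, if_neg (by omega : ¬ i' ≤ l), if_neg (by omega : ¬ (k ≤ i' ∧ i' ≤ l))]
          push_cast
          ring
      · have hA : Elev j m i' k = 0 := by rw [Elev, if_neg (by omega)]
        rw [hA, mul_zero, if_neg (by omega : ¬ (k ≤ i' ∧ i' ≤ l))]
        push_cast
        ring
    rw [Finset.sum_congr rfl hterm]
    rw [← Finset.sum_div, ← Finset.mul_sum, ← Nat.cast_sum, hNat, Elev, if_pos hkl]

lemma core (m j : ℕ) (hj : j ≤ m) (i : ℕ) (hi : i ≤ m) :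
    ∀ n, m ≤ n → ∑ l ∈ Finset.range (n + 1), Elev m n l i * wB n j l =
      (massEig m j / massEig n j) * wB m j i := by
  intro n hmn
  induction n, hmn using Nat.le_induction with
  | base =>
    rw [div_self (massEig_ne_zero m j), one_mul]
    rw [Finset.sum_eq_single_of_mem i (Finset.mem_range.mpr (by omega))]
    · have : Elev m m i i = 1 := by
        rw [Elev, if_pos (le_refl i), Nat.sub_self, Nat.sub_self, Nat.choose_zero_right]
        have hm : (m.choose i : ℝ) ≠ 0 := (Nat.cast_pos.mpr (Nat.choose_pos hi)).ne'
        push_cast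
        field_simp
      rw [this, one_mul]
    · intro b _ hb
      have : Elev m m b i = 0 := by
        rcases le_or_gt b i with h | h
        · rw [Elev, if_neg (by omega)]
        · rw [Elev, if_pos (by omega), Nat.sub_self,
            Nat.choose_eq_zero_of_lt (show 0 < b - i by omega)]
          push_cast
          ring
      rw [this, zero_mul]
  | succ n hmn ih =>
    calc ∑ l ∈ Finset.range (n + 2), Elev m (n + 1) l i * wB (n + 1) j l
        = ∑ l ∈ Finset.range (n + 2), ∑ i' ∈ Finset.range (n + 1),
            Elev m n i' i * (Elev n (n + 1) l i' * wB (n + 1) j l) := by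
          refine Finset.sum_congr rfl fun l hl => ?_
          rw [Finset.mem_range] at hl
          rw [← comp m n (n + 1) hmn (by omega) l i (by omega) hi, Finset.sum_mul]
          exact Finset.sum_congr rfl fun i' _ => by ring
      _ = ∑ i' ∈ Finset.range (n + 1), Elev m n i' i *
            ∑ l ∈ Finset.range (n + 2), Elev n (n + 1) l i' * wB (n + 1) j l := by
          rw [Finset.sum_comm]
          exact Finset.sum_congr rfl fun i' _ => by rw [Finset.mul_sum]
      _ = ∑ i' ∈ Finset.range (n + 1), Elev m n i' i *
            ((massEig n j / massEig (n + 1) j) * wB n j i') := by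
          refine Finset.sum_congr rfl fun i' hi' => ?_
          rw [Finset.mem_range] at hi'
          rw [onestep n j i' (le_trans hj hmn) (by omega)]
      _ = (massEig n j / massEig (n + 1) j) *
            ∑ i' ∈ Finset.range (n + 1), Elev m n i' i * wB n j i' := by
          rw [Finset.mul_sum]
          exact Finset.sum_congr rfl fun _ _ => by ring
      _ = (massEig n j / massEig (n + 1) j) * ((massEig m j / massEig n j) * wB m j i) := by
          rw [ih]
      _ = (massEig m j / massEig (n + 1) j) * wB m j i := by
          have h1 := massEig_ne_zero n j
          have h2 := massEig_ne_zero (n + 1) j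
          field_simp

lemma inner_collapse (m n : ℕ) (hmn : m ≤ n) (j : ℕ) (hj : j ≤ m) (l : ℕ) (hl : l ≤ n) :
    ∑ i' ∈ Finset.range (m + 1), Elev m n l i' * wB m j i' = wB n j l := by
  unfold wB
  calc ∑ i' ∈ Finset.range (m + 1), Elev m n l i' *
        ∑ k ∈ Finset.range (j + 1), Elev j m i' k * legendreCoeff j k
      = ∑ i' ∈ Finset.range (m + 1), ∑ k ∈ Finset.range (j + 1),
          Elev m n l i' * Elev j m i' k * legendreCoeff j k := by
        refine Finset.sum_congr rfl fun i' _ => ?_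
        rw [Finset.mul_sum]
        exact Finset.sum_congr rfl fun k _ => by ring
    _ = ∑ k ∈ Finset.range (j + 1), ∑ i' ∈ Finset.range (m + 1),
          Elev m n l i' * Elev j m i' k * legendreCoeff j k := Finset.sum_comm
    _ = ∑ k ∈ Finset.range (j + 1),
          (∑ i' ∈ Finset.range (m + 1), Elev m n l i' * Elev j m i' k) * legendreCoeff j k := by
        refine Finset.sum_congr rfl fun k _ => ?_
        rw [Finset.sum_mul]
    _ = ∑ k ∈ Finset.range (j + 1), Elev j n l k * legendreCoeff j k := by
        refine Finset.sum_congr rfl fun k hk => ?_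
        rw [Finset.mem_range] at hk
        rw [comp j m n hj hmn l k hl (by omega)]


theorem ETE_eigenvector (m n : ℕ) (hmn : m ≤ n) (j : ℕ) (hj : j ≤ m) (i : ℕ) (hi : i ≤ m) :
    (∑ i' ∈ Finset.range (m + 1),
        (∑ l ∈ Finset.range (n + 1), Elev m n l i * Elev m n l i') *
          (∑ k ∈ Finset.range (j + 1), Elev j m i' k * legendreCoeff j k)) =
      (massEig m j / massEig n j) *
        ∑ k ∈ Finset.range (j + 1), Elev j m i k * legendreCoeff j k := by
  show ∑ i' ∈ Finset.range (m + 1),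
      (∑ l ∈ Finset.range (n + 1), Elev m n l i * Elev m n l i') * wB m j i' =
    (massEig m j / massEig n j) * wB m j i
  calc ∑ i' ∈ Finset.range (m + 1),
        (∑ l ∈ Finset.range (n + 1), Elev m n l i * Elev m n l i') * wB m j i'
      = ∑ i' ∈ Finset.range (m + 1), ∑ l ∈ Finset.range (n + 1),
          Elev m n l i * Elev m n l i' * wB m j i' := by
        refine Finset.sum_congr rfl fun i' _ => ?_
        rw [Finset.sum_mul]
    _ = ∑ l ∈ Finset.range (n + 1), ∑ i' ∈ Finset.range (m + 1),
          Elev m n l i * Elev m n l i' * wB m j i' := Finset.sum_comm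
    _ = ∑ l ∈ Finset.range (n + 1), Elev m n l i *
          ∑ i' ∈ Finset.range (m + 1), Elev m n l i' * wB m j i' := by
        refine Finset.sum_congr rfl fun l _ => ?_
        rw [Finset.mul_sum]
        exact Finset.sum_congr rfl fun i' _ => by ring
    _ = ∑ l ∈ Finset.range (n + 1), Elev m n l i * wB n j l := by
        refine Finset.sum_congr rfl fun l hl => ?_
        rw [Finset.mem_range] at hl
        rw [inner_collapse m n hmn j hj l (by omega)]
    _ = (massEig m j / massEig n j) * wB m j i := core m j hj i hi n hmn
end
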